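/- A †-linearly distributive category (an LDC X with a contravariant Frobenius linear functor (−)† : Xᵒᵖ → X that is a linear involutive equivalence (−)† ⊣⊣ ((−)†)ᵒᵖ) is exactly the same data as an LDC X with a functor (−)† : Xᵒᵖ → X, natural isomorphisms (laxors) λ⊗ : A† ⊗ B† → (A ⊕ B)†, λ⊕ : A† ⊕ B† → (A ⊗ B)†, λ⊤ : ⊤ → ⊥†, λ⊥ : ⊥ → ⊤†, and a natural isomorphism (involutor) ι : A → (A†)† satisfying: [†-ldc.1] compatibility of λ⊗ and λ⊕ with the associators of ⊗ and ⊕; [†-ldc.2] compatibility of λ⊤ and λ⊥ with the (left and right) unitors; [†-ldc.3] compatibility of λ⊗ and λ⊕ with the linear distributors ∂L and ∂R; [†-ldc.4] ι_{A⊕B} ; λ⊗† = (ι ⊕ ι) ; λ⊕ and ι_{A⊗B} ; λ⊕† = (ι ⊗ ι) ; λ⊗; [†-ldc.5] ι_⊥ ; λ⊤† = λ⊥ and ι_⊤ ; λ⊥† = λ⊤; [†-ldc.6] ι_{A†} = (ι_A⁻¹)†. -/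

import Mathlib

open CategoryTheory

universe v u v₂ u₂ v₃ u₃

/-- A linearly distributive category (LDC): a category with two monoidal structures
`T = (⊗, ⊤)` (tensor) and `P = (⊕, ⊥)` (par), linked by natural linear distributors
`∂L : A ⊗ (B ⊕ X) ⟶ (A ⊗ B) ⊕ X` and `∂R : (A ⊕ B) ⊗ X ⟶ A ⊕ (B ⊗ X)`
(satisfying the Cockett–Seely coherence conditions). -/
structure LDC (C : Type u) [Category.{v} C] where
  T : MonoidalCategory C
  P : MonoidalCategory C
  distL : ∀ A B X : C, T.tensorObj A (P.tensorObj B X) ⟶ P.tensorObj (T.tensorObj A B) X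
  distR : ∀ A B X : C, T.tensorObj (P.tensorObj A B) X ⟶ P.tensorObj A (T.tensorObj B X)
  distL_natural : ∀ {A A' B B' X X' : C} (f : A ⟶ A') (g : B ⟶ B') (h : X ⟶ X'),
    T.tensorHom f (P.tensorHom g h) ≫ distL A' B' X'
      = distL A B X ≫ P.tensorHom (T.tensorHom f g) h
  distR_natural : ∀ {A A' B B' X X' : C} (f : A ⟶ A') (g : B ⟶ B') (h : X ⟶ X'),
    T.tensorHom (P.tensorHom f g) h ≫ distR A' B' X'
      = distR A B X ≫ P.tensorHom f (T.tensorHom g h)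

namespace LDC

variable {C : Type u} [Category.{v} C]

/-- tensor on objects -/
abbrev ot (L : LDC C) (A B : C) : C := L.T.tensorObj A B
/-- par on objects -/
abbrev op (L : LDC C) (A B : C) : C := L.P.tensorObj A B
/-- tensor unit ⊤ -/
abbrev tu (L : LDC C) : C := L.T.tensorUnit
/-- par unit ⊥ -/
abbrev pu (L : LDC C) : C := L.P.tensorUnit
/-- tensor on morphisms -/
abbrev oth (L : LDC C) {A B A' B' : C} (f : A ⟶ A') (g : B ⟶ B') :
    L.ot A B ⟶ L.ot A' B' := L.T.tensorHom f g
/-- par on morphisms -/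
abbrev oph (L : LDC C) {A B A' B' : C} (f : A ⟶ A') (g : B ⟶ B') :
    L.op A B ⟶ L.op A' B' := L.P.tensorHom f g
/-- associator of the tensor -/
abbrev aT (L : LDC C) (A B X : C) : L.ot (L.ot A B) X ≅ L.ot A (L.ot B X) := L.T.associator A B X
/-- associator of the par -/
abbrev aP (L : LDC C) (A B X : C) : L.op (L.op A B) X ≅ L.op A (L.op B X) := L.P.associator A B X
/-- left unitor of the tensor -/
abbrev luT (L : LDC C) (A : C) : L.ot L.tu A ≅ A := L.T.leftUnitor A
/-- right unitor of the tensor -/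
abbrev ruT (L : LDC C) (A : C) : L.ot A L.tu ≅ A := L.T.rightUnitor A
/-- left unitor of the par -/
abbrev luP (L : LDC C) (A : C) : L.op L.pu A ≅ A := L.P.leftUnitor A
/-- right unitor of the par -/
abbrev ruP (L : LDC C) (A : C) : L.op A L.pu ≅ A := L.P.rightUnitor A

end LDC

section LinearFunctor

variable {C : Type u} [Category.{v} C] {D : Type u₂} [Category.{v₂} D]

/-- The data of a linear functor between LDCs: a pair of functors `Ft` (tensor part,
lax `⊗`-monoidal via `mT, mU`) and `Fp` (par part, `⊕`-comonoidal via `nP, nU`), together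
with the four linear strengths `vtR, vtL, vpR, vpL`. -/
structure LinearFunctorData (X : LDC C) (Y : LDC D) where
  Ft : C ⥤ D
  Fp : C ⥤ D
  mT : ∀ A B : C, Y.ot (Ft.obj A) (Ft.obj B) ⟶ Ft.obj (X.ot A B)
  mU : Y.tu ⟶ Ft.obj X.tu
  nP : ∀ A B : C, Fp.obj (X.op A B) ⟶ Y.op (Fp.obj A) (Fp.obj B)
  nU : Fp.obj X.pu ⟶ Y.pu
  vtR : ∀ A B : C, Ft.obj (X.op A B) ⟶ Y.op (Fp.obj A) (Ft.obj B)
  vtL : ∀ A B : C, Ft.obj (X.op A B) ⟶ Y.op (Ft.obj A) (Fp.obj B)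
  vpR : ∀ A B : C, Y.ot (Ft.obj A) (Fp.obj B) ⟶ Fp.obj (X.ot A B)
  vpL : ∀ A B : C, Y.ot (Fp.obj A) (Ft.obj B) ⟶ Fp.obj (X.ot A B)

/-- The coherence laws of a linear functor: naturality of all the structure maps,
lax monoidality of `(Ft, mT, mU)`, comonoidality of `(Fp, nP, nU)`, and the
Cockett–Seely coherences [LF.1]–[LF.5]. -/
structure LinearFunctorLaws {X : LDC C} {Y : LDC D} (F : LinearFunctorData X Y) : Prop where
  mT_natural : ∀ {A A' B B' : C} (f : A ⟶ A') (g : B ⟶ B'),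
    Y.oth (F.Ft.map f) (F.Ft.map g) ≫ F.mT A' B' = F.mT A B ≫ F.Ft.map (X.oth f g)
  mT_assoc : ∀ A B Cc : C,
    Y.oth (F.mT A B) (𝟙 (F.Ft.obj Cc)) ≫ F.mT (X.ot A B) Cc ≫ F.Ft.map (X.aT A B Cc).hom
      = (Y.aT (F.Ft.obj A) (F.Ft.obj B) (F.Ft.obj Cc)).hom
          ≫ Y.oth (𝟙 (F.Ft.obj A)) (F.mT B Cc) ≫ F.mT A (X.ot B Cc)
  mT_lu : ∀ A : C,
    Y.oth F.mU (𝟙 (F.Ft.obj A)) ≫ F.mT X.tu A ≫ F.Ft.map (X.luT A).hom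
      = (Y.luT (F.Ft.obj A)).hom
  mT_ru : ∀ A : C,
    Y.oth (𝟙 (F.Ft.obj A)) F.mU ≫ F.mT A X.tu ≫ F.Ft.map (X.ruT A).hom
      = (Y.ruT (F.Ft.obj A)).hom
  nP_natural : ∀ {A A' B B' : C} (f : A ⟶ A') (g : B ⟶ B'),
    F.Fp.map (X.oph f g) ≫ F.nP A' B' = F.nP A B ≫ Y.oph (F.Fp.map f) (F.Fp.map g)
  nP_assoc : ∀ A B Cc : C,
    F.nP (X.op A B) Cc ≫ Y.oph (F.nP A B) (𝟙 (F.Fp.obj Cc))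
        ≫ (Y.aP (F.Fp.obj A) (F.Fp.obj B) (F.Fp.obj Cc)).hom
      = F.Fp.map (X.aP A B Cc).hom ≫ F.nP A (X.op B Cc) ≫ Y.oph (𝟙 (F.Fp.obj A)) (F.nP B Cc)
  nP_lu : ∀ A : C,
    F.Fp.map (X.luP A).hom
      = F.nP X.pu A ≫ Y.oph F.nU (𝟙 (F.Fp.obj A)) ≫ (Y.luP (F.Fp.obj A)).hom
  nP_ru : ∀ A : C,
    F.Fp.map (X.ruP A).hom
      = F.nP A X.pu ≫ Y.oph (𝟙 (F.Fp.obj A)) F.nU ≫ (Y.ruP (F.Fp.obj A)).hom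
  vtR_natural : ∀ {A A' B B' : C} (f : A ⟶ A') (g : B ⟶ B'),
    F.Ft.map (X.oph f g) ≫ F.vtR A' B' = F.vtR A B ≫ Y.oph (F.Fp.map f) (F.Ft.map g)
  vtL_natural : ∀ {A A' B B' : C} (f : A ⟶ A') (g : B ⟶ B'),
    F.Ft.map (X.oph f g) ≫ F.vtL A' B' = F.vtL A B ≫ Y.oph (F.Ft.map f) (F.Fp.map g)
  vpR_natural : ∀ {A A' B B' : C} (f : A ⟶ A') (g : B ⟶ B'),
    Y.oth (F.Ft.map f) (F.Fp.map g) ≫ F.vpR A' B' = F.vpR A B ≫ F.Fp.map (X.oth f g)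
  vpL_natural : ∀ {A A' B B' : C} (f : A ⟶ A') (g : B ⟶ B'),
    Y.oth (F.Fp.map f) (F.Ft.map g) ≫ F.vpL A' B' = F.vpL A B ≫ F.Fp.map (X.oth f g)
  lf1a : ∀ A : C,
    F.Ft.map (X.luP A).hom
      = F.vtR X.pu A ≫ Y.oph F.nU (𝟙 (F.Ft.obj A)) ≫ (Y.luP (F.Ft.obj A)).hom
  lf1b : ∀ A : C,
    F.Ft.map (X.ruP A).hom
      = F.vtL A X.pu ≫ Y.oph (𝟙 (F.Ft.obj A)) F.nU ≫ (Y.ruP (F.Ft.obj A)).hom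
  lf1c : ∀ A : C,
    (Y.luT (F.Fp.obj A)).inv ≫ Y.oth F.mU (𝟙 (F.Fp.obj A)) ≫ F.vpR X.tu A
      = F.Fp.map (X.luT A).inv
  lf1d : ∀ A : C,
    (Y.ruT (F.Fp.obj A)).inv ≫ Y.oth (𝟙 (F.Fp.obj A)) F.mU ≫ F.vpL A X.tu
      = F.Fp.map (X.ruT A).inv
  lf2a : ∀ A B Cc : C,
    F.Ft.map (X.aP A B Cc).hom ≫ F.vtR A (X.op B Cc) ≫ Y.oph (𝟙 (F.Fp.obj A)) (F.vtR B Cc)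
      = F.vtR (X.op A B) Cc ≫ Y.oph (F.nP A B) (𝟙 (F.Ft.obj Cc))
          ≫ (Y.aP (F.Fp.obj A) (F.Fp.obj B) (F.Ft.obj Cc)).hom
  lf2b : ∀ A B Cc : C,
    F.Ft.map (X.aP A B Cc).hom ≫ F.vtL A (X.op B Cc) ≫ Y.oph (𝟙 (F.Ft.obj A)) (F.nP B Cc)
      = F.vtL (X.op A B) Cc ≫ Y.oph (F.vtL A B) (𝟙 (F.Fp.obj Cc))
          ≫ (Y.aP (F.Ft.obj A) (F.Fp.obj B) (F.Fp.obj Cc)).hom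
  lf2c : ∀ A B Cc : C,
    Y.oth (F.mT A B) (𝟙 (F.Fp.obj Cc)) ≫ F.vpR (X.ot A B) Cc ≫ F.Fp.map (X.aT A B Cc).hom
      = (Y.aT (F.Ft.obj A) (F.Ft.obj B) (F.Fp.obj Cc)).hom
          ≫ Y.oth (𝟙 (F.Ft.obj A)) (F.vpR B Cc) ≫ F.vpR A (X.ot B Cc)
  lf2d : ∀ A B Cc : C,
    Y.oth (F.vpL A B) (𝟙 (F.Ft.obj Cc)) ≫ F.vpL (X.ot A B) Cc ≫ F.Fp.map (X.aT A B Cc).hom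
      = (Y.aT (F.Fp.obj A) (F.Ft.obj B) (F.Ft.obj Cc)).hom
          ≫ Y.oth (𝟙 (F.Fp.obj A)) (F.mT B Cc) ≫ F.vpL A (X.ot B Cc)
  lf3a : ∀ A B Cc : C,
    F.Ft.map (X.aP A B Cc).hom ≫ F.vtR A (X.op B Cc) ≫ Y.oph (𝟙 (F.Fp.obj A)) (F.vtL B Cc)
      = F.vtL (X.op A B) Cc ≫ Y.oph (F.vtR A B) (𝟙 (F.Fp.obj Cc))
          ≫ (Y.aP (F.Fp.obj A) (F.Ft.obj B) (F.Fp.obj Cc)).hom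
  lf3b : ∀ A B Cc : C,
    Y.oth (F.vpR A B) (𝟙 (F.Ft.obj Cc)) ≫ F.vpL (X.ot A B) Cc ≫ F.Fp.map (X.aT A B Cc).hom
      = (Y.aT (F.Ft.obj A) (F.Fp.obj B) (F.Ft.obj Cc)).hom
          ≫ Y.oth (𝟙 (F.Ft.obj A)) (F.vpL B Cc) ≫ F.vpR A (X.ot B Cc)
  lf4a : ∀ A B Cc : C,
    Y.oth (𝟙 (F.Ft.obj A)) (F.vtR B Cc)
        ≫ Y.distL (F.Ft.obj A) (F.Fp.obj B) (F.Ft.obj Cc)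
        ≫ Y.oph (F.vpR A B) (𝟙 (F.Ft.obj Cc))
      = F.mT A (X.op B Cc) ≫ F.Ft.map (X.distL A B Cc) ≫ F.vtR (X.ot A B) Cc
  lf4b : ∀ A B Cc : C,
    Y.oth (F.vtL A B) (𝟙 (F.Ft.obj Cc))
        ≫ Y.distR (F.Ft.obj A) (F.Fp.obj B) (F.Ft.obj Cc)
        ≫ Y.oph (𝟙 (F.Ft.obj A)) (F.vpL B Cc)
      = F.mT (X.op A B) Cc ≫ F.Ft.map (X.distR A B Cc) ≫ F.vtL A (X.ot B Cc)
  lf4c : ∀ A B Cc : C,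
    Y.oth (𝟙 (F.Fp.obj A)) (F.vtL B Cc)
        ≫ Y.distL (F.Fp.obj A) (F.Ft.obj B) (F.Fp.obj Cc)
        ≫ Y.oph (F.vpL A B) (𝟙 (F.Fp.obj Cc))
      = F.vpL A (X.op B Cc) ≫ F.Fp.map (X.distL A B Cc) ≫ F.nP (X.ot A B) Cc
  lf4d : ∀ A B Cc : C,
    Y.oth (F.vtR A B) (𝟙 (F.Fp.obj Cc))
        ≫ Y.distR (F.Fp.obj A) (F.Ft.obj B) (F.Fp.obj Cc)
        ≫ Y.oph (𝟙 (F.Fp.obj A)) (F.vpR B Cc)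
      = F.vpR (X.op A B) Cc ≫ F.Fp.map (X.distR A B Cc) ≫ F.nP A (X.ot B Cc)
  lf5a : ∀ A B Cc : C,
    Y.oth (𝟙 (F.Ft.obj A)) (F.vtL B Cc)
        ≫ Y.distL (F.Ft.obj A) (F.Ft.obj B) (F.Fp.obj Cc)
        ≫ Y.oph (F.mT A B) (𝟙 (F.Fp.obj Cc))
      = F.mT A (X.op B Cc) ≫ F.Ft.map (X.distL A B Cc) ≫ F.vtL (X.ot A B) Cc
  lf5b : ∀ A B Cc : C,
    Y.oth (F.vtR A B) (𝟙 (F.Ft.obj Cc))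
        ≫ Y.distR (F.Fp.obj A) (F.Ft.obj B) (F.Ft.obj Cc)
        ≫ Y.oph (𝟙 (F.Fp.obj A)) (F.mT B Cc)
      = F.mT (X.op A B) Cc ≫ F.Ft.map (X.distR A B Cc) ≫ F.vtR A (X.ot B Cc)
  lf5c : ∀ A B Cc : C,
    Y.oth (𝟙 (F.Ft.obj A)) (F.nP B Cc)
        ≫ Y.distL (F.Ft.obj A) (F.Fp.obj B) (F.Fp.obj Cc)
        ≫ Y.oph (F.vpR A B) (𝟙 (F.Fp.obj Cc))
      = F.vpR A (X.op B Cc) ≫ F.Fp.map (X.distL A B Cc) ≫ F.nP (X.ot A B) Cc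
  lf5d : ∀ A B Cc : C,
    Y.oth (F.nP A B) (𝟙 (F.Ft.obj Cc))
        ≫ Y.distR (F.Fp.obj A) (F.Fp.obj B) (F.Ft.obj Cc)
        ≫ Y.oph (𝟙 (F.Fp.obj A)) (F.vpL B Cc)
      = F.vpL (X.op A B) Cc ≫ F.Fp.map (X.distR A B Cc) ≫ F.nP A (X.ot B Cc)

/-- A linear functor between LDCs. -/
structure LinearFunctor (X : LDC C) (Y : LDC D) extends LinearFunctorData X Y where
  laws : LinearFunctorLaws toLinearFunctorData

end LinearFunctor
section Mix

variable {C : Type u} [Category.{v} C] {D : Type u₂} [Category.{v₂} D]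

/-- A mix category: an LDC with a mix map `m : ⊥ ⟶ ⊤` such that the two canonical
composites `A ⊗ B ⟶ A ⊕ B` (via the unitors, `m`, and the two linear distributors)
coincide. -/
structure MixCat (C : Type u) [Category.{v} C] where
  X : LDC C
  mix : X.pu ⟶ X.tu
  mix_coh : ∀ A B : C,
    X.oth (𝟙 A) ((X.luP B).inv ≫ X.oph mix (𝟙 B)) ≫ X.distL A X.tu B
        ≫ X.oph (X.ruT A).hom (𝟙 B)
      = X.oth ((X.ruP A).inv) (𝟙 B) ≫ X.distR A X.pu B
        ≫ X.oph (𝟙 A) (X.oth mix (𝟙 B) ≫ (X.luT B).hom)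

/-- The mixor `mx : A ⊗ B ⟶ A ⊕ B` of a mix category. -/
def MixCat.mx (M : MixCat C) (A B : C) : M.X.ot A B ⟶ M.X.op A B :=
  M.X.oth (𝟙 A) ((M.X.luP B).inv ≫ M.X.oph M.mix (𝟙 B)) ≫ M.X.distL A M.X.tu B
    ≫ M.X.oph (M.X.ruT A).hom (𝟙 B)

/-- An object is in the core of a mix category when all mixors out of it and into it
are isomorphisms. -/
def MixCat.inCore (M : MixCat C) (U : C) : Prop :=
  (∀ B : C, IsIso (M.mx U B)) ∧ (∀ B : C, IsIso (M.mx B U))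

/-- An isomix category: a mix category whose mix map is an isomorphism
(with specified inverse). -/
structure IsomixCat (C : Type u) [Category.{v} C] extends MixCat C where
  mixInv : X.tu ⟶ X.pu
  mix_mixInv : mix ≫ mixInv = 𝟙 X.pu
  mixInv_mix : mixInv ≫ mix = 𝟙 X.tu

/-- A Frobenius (linear) functor between LDCs: a linear functor whose tensor and par
parts coincide (`Ft = Fp = F`), with `m⊗ = ν⊕ᴸ = ν⊕ᴿ` and `n⊕ = ν⊗ᴸ = ν⊗ᴿ`. -/
structure FrobFunctor (X : LDC C) (Y : LDC D) where
  F : C ⥤ D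
  mT : ∀ A B : C, Y.ot (F.obj A) (F.obj B) ⟶ F.obj (X.ot A B)
  mU : Y.tu ⟶ F.obj X.tu
  nP : ∀ A B : C, F.obj (X.op A B) ⟶ Y.op (F.obj A) (F.obj B)
  nU : F.obj X.pu ⟶ Y.pu
  laws : LinearFunctorLaws (X := X) (Y := Y) ⟨F, F, mT, mU, nP, nU, nP, nP, mT, mT⟩

/-- The linear-functor data underlying a Frobenius functor. -/
def FrobFunctor.data {X : LDC C} {Y : LDC D} (G : FrobFunctor X Y) : LinearFunctorData X Y :=
  ⟨G.F, G.F, G.mT, G.mU, G.nP, G.nU, G.nP, G.nP, G.mT, G.mT⟩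

/-- A mix functor between mix categories: a Frobenius functor satisfying
`n⊥ ; m ; m⊤ = F(m)` ([mix-FF]). -/
def IsMixFunctor {M : MixCat C} {N : MixCat D} (G : FrobFunctor M.X N.X) : Prop :=
  G.nU ≫ N.mix ≫ G.mU = G.F.map M.mix

/-- The isomix condition [isomix-FF] on a Frobenius functor between isomix categories:
`m⊤ ; F(m⁻¹) ; n⊥ = m⁻¹`. -/
def IsIsomixFunctor {M : IsomixCat C} {N : IsomixCat D}
    (G : FrobFunctor M.X N.X) : Prop :=
  G.mU ≫ G.F.map M.mixInv ≫ G.nU = N.mixInv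

/-- A linear transformation `α : F ⇒ G` between (the data of) linear functors: a
monoidal transformation `α⊗ : F⊗ ⇒ G⊗` and a comonoidal transformation
`α⊕ : G⊕ ⇒ F⊕` satisfying [LT.1]–[LT.4]. -/
structure LinearTransf {X : LDC C} {Y : LDC D} (F G : LinearFunctorData X Y) where
  aT : ∀ A : C, F.Ft.obj A ⟶ G.Ft.obj A
  aT_natural : ∀ {A B : C} (f : A ⟶ B), F.Ft.map f ≫ aT B = aT A ≫ G.Ft.map f
  aP : ∀ A : C, G.Fp.obj A ⟶ F.Fp.obj A
  aP_natural : ∀ {A B : C} (f : A ⟶ B), G.Fp.map f ≫ aP B = aP A ≫ F.Fp.map f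
  aT_tensor : ∀ A B : C,
    Y.oth (aT A) (aT B) ≫ G.mT A B = F.mT A B ≫ aT (X.ot A B)
  aT_unit : F.mU ≫ aT X.tu = G.mU
  aP_cotensor : ∀ A B : C,
    aP (X.op A B) ≫ F.nP A B = G.nP A B ≫ Y.oph (aP A) (aP B)
  aP_counit : aP X.pu ≫ F.nU = G.nU
  lt1 : ∀ A B : C,
    aT (X.op A B) ≫ G.vtR A B ≫ Y.oph (aP A) (𝟙 (G.Ft.obj B))
      = F.vtR A B ≫ Y.oph (𝟙 (F.Fp.obj A)) (aT B)
  lt2 : ∀ A B : C,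
    aT (X.op A B) ≫ G.vtL A B ≫ Y.oph (𝟙 (G.Ft.obj A)) (aP B)
      = F.vtL A B ≫ Y.oph (aT A) (𝟙 (F.Fp.obj B))
  lt3 : ∀ A B : C,
    Y.oth (𝟙 (G.Fp.obj A)) (aT B) ≫ G.vpL A B ≫ aP (X.ot A B)
      = Y.oth (aP A) (𝟙 (F.Ft.obj B)) ≫ F.vpL A B
  lt4 : ∀ A B : C,
    Y.oth (aT A) (𝟙 (G.Fp.obj B)) ≫ G.vpR A B ≫ aP (X.ot A B)
      = Y.oth (𝟙 (F.Ft.obj A)) (aP B) ≫ F.vpR A B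

/-- `(η, ε) : A ⊣⊣ B` is a linear dual in an LDC: `η : ⊤ ⟶ A ⊕ B` and
`ε : B ⊗ A ⟶ ⊥` satisfy the two snake identities. -/
def IsLinearDual (X : LDC C) (A B : C) (η : X.tu ⟶ X.op A B) (ε : X.ot B A ⟶ X.pu) : Prop :=
  ((X.luT A).inv ≫ X.oth η (𝟙 A) ≫ X.distR A B A ≫ X.oph (𝟙 A) ε ≫ (X.ruP A).hom = 𝟙 A) ∧
  ((X.ruT B).inv ≫ X.oth (𝟙 B) η ≫ X.distL B A B ≫ X.oph ε (𝟙 B) ≫ (X.luP B).hom = 𝟙 B)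

/-- The degenerate LDC on a single monoidal structure (tensor = par), with the
associator isomorphisms as linear distributors. -/
def LDC.deg (Mo : MonoidalCategory C) : LDC C where
  T := Mo
  P := Mo
  distL A B X := (Mo.associator A B X).inv
  distR A B X := (Mo.associator A B X).hom
  distL_natural := by
    intro A A' B B' X X' f g h
    rw [Iso.comp_inv_eq, Category.assoc, Mo.associator_naturality, Iso.inv_hom_id_assoc]
  distR_natural := by
    intro A A' B B' X X' f g h
    exact Mo.associator_naturality f g h

end Mix
section Dagger

open Opposite

variable {C : Type u} [Category.{v} C]

/-- The data of a dagger on an LDC: a contravariant functor `(−)† : Cᵒᵖ ⥤ C` together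
with natural isomorphisms (laxors) `λ⊗ : A† ⊗ B† ≅ (A ⊕ B)†`, `λ⊕ : A† ⊕ B† ≅ (A ⊗ B)†`,
`λ⊤ : ⊤ ≅ ⊥†`, `λ⊥ : ⊥ ≅ ⊤†` and the involutor `ι : A ≅ A††`. -/
structure DagData (X : LDC C) where
  dag : Cᵒᵖ ⥤ C
  lamTens : ∀ A B : C, X.ot (dag.obj (op A)) (dag.obj (op B)) ≅ dag.obj (op (X.op A B))
  lamPar : ∀ A B : C, X.op (dag.obj (op A)) (dag.obj (op B)) ≅ dag.obj (op (X.ot A B))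
  lamTop : X.tu ≅ dag.obj (op X.pu)
  lamBot : X.pu ≅ dag.obj (op X.tu)
  invol : ∀ A : C, A ≅ dag.obj (op (dag.obj (op A)))

namespace DagData

variable {X : LDC C}

/-- `A†` -/
abbrev dg (D : DagData X) (A : C) : C := D.dag.obj (op A)

/-- `f† : B† ⟶ A†` for `f : A ⟶ B` -/
abbrev dgm (D : DagData X) {A B : C} (f : A ⟶ B) : D.dg B ⟶ D.dg A := D.dag.map f.op

end DagData

/-- The coherence laws [†-ldc.1]–[†-ldc.6] making `(X, dag, λ⊗, λ⊕, λ⊤, λ⊥, ι)` into a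
†-LDC (as spelled out in the unfolded definition of a †-linearly distributive category),
together with naturality of the laxors and of the involutor. -/
structure DagLaws {X : LDC C} (D : DagData X) : Prop where
  lamTens_natural : ∀ {A A' B B' : C} (f : A ⟶ A') (g : B ⟶ B'),
    X.oth (D.dgm f) (D.dgm g) ≫ (D.lamTens A B).hom
      = (D.lamTens A' B').hom ≫ D.dgm (X.oph f g)
  lamPar_natural : ∀ {A A' B B' : C} (f : A ⟶ A') (g : B ⟶ B'),
    X.oph (D.dgm f) (D.dgm g) ≫ (D.lamPar A B).hom
      = (D.lamPar A' B').hom ≫ D.dgm (X.oth f g)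
  invol_natural : ∀ {A B : C} (f : A ⟶ B),
    f ≫ (D.invol B).hom = (D.invol A).hom ≫ D.dgm (D.dgm f)
  /-- [†-ldc.1] for `λ⊗` and the associators -/
  ldc1a : ∀ A B Cc : C,
    (X.aT (D.dg A) (D.dg B) (D.dg Cc)).inv ≫ X.oth (D.lamTens A B).hom (𝟙 (D.dg Cc))
        ≫ (D.lamTens (X.op A B) Cc).hom
      = X.oth (𝟙 (D.dg A)) (D.lamTens B Cc).hom ≫ (D.lamTens A (X.op B Cc)).hom
          ≫ D.dgm (X.aP A B Cc).hom
  /-- [†-ldc.1] for `λ⊕` and the associators -/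
  ldc1b : ∀ A B Cc : C,
    (X.aP (D.dg A) (D.dg B) (D.dg Cc)).inv ≫ X.oph (D.lamPar A B).hom (𝟙 (D.dg Cc))
        ≫ (D.lamPar (X.ot A B) Cc).hom
      = X.oph (𝟙 (D.dg A)) (D.lamPar B Cc).hom ≫ (D.lamPar A (X.ot B Cc)).hom
          ≫ D.dgm (X.aT A B Cc).hom
  /-- [†-ldc.2] for `λ⊤` (left) -/
  ldc2a : ∀ A : C,
    X.oth D.lamTop.hom (𝟙 (D.dg A)) ≫ (D.lamTens X.pu A).hom
      = (X.luT (D.dg A)).hom ≫ D.dgm (X.luP A).hom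
  /-- [†-ldc.2] for `λ⊤` (right) -/
  ldc2b : ∀ A : C,
    X.oth (𝟙 (D.dg A)) D.lamTop.hom ≫ (D.lamTens A X.pu).hom
      = (X.ruT (D.dg A)).hom ≫ D.dgm (X.ruP A).hom
  /-- [†-ldc.2] for `λ⊥` (left) -/
  ldc2c : ∀ A : C,
    X.oph D.lamBot.hom (𝟙 (D.dg A)) ≫ (D.lamPar X.tu A).hom
      = (X.luP (D.dg A)).hom ≫ D.dgm (X.luT A).hom
  /-- [†-ldc.2] for `λ⊥` (right) -/
  ldc2d : ∀ A : C,
    X.oph (𝟙 (D.dg A)) D.lamBot.hom ≫ (D.lamPar A X.tu).hom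
      = (X.ruP (D.dg A)).hom ≫ D.dgm (X.ruT A).hom
  /-- [†-ldc.3] (first distributor square) -/
  ldc3a : ∀ A B Cc : C,
    X.distL (D.dg A) (D.dg B) (D.dg Cc) ≫ X.oph (D.lamTens A B).hom (𝟙 (D.dg Cc))
        ≫ (D.lamPar (X.op A B) Cc).hom
      = X.oth (𝟙 (D.dg A)) (D.lamPar B Cc).hom ≫ (D.lamTens A (X.ot B Cc)).hom
          ≫ D.dgm (X.distR A B Cc)
  /-- [†-ldc.3] (second distributor square) -/
  ldc3b : ∀ A B Cc : C,
    X.distR (D.dg A) (D.dg B) (D.dg Cc) ≫ X.oph (𝟙 (D.dg A)) (D.lamTens B Cc).hom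
        ≫ (D.lamPar A (X.op B Cc)).hom
      = X.oth (D.lamPar A B).hom (𝟙 (D.dg Cc)) ≫ (D.lamTens (X.ot A B) Cc).hom
          ≫ D.dgm (X.distL A B Cc)
  /-- [†-ldc.4] : `ι_{A⊕B} ; λ⊗† = (ι ⊕ ι) ; λ⊕` -/
  ldc4a : ∀ A B : C,
    (D.invol (X.op A B)).hom ≫ D.dgm (D.lamTens A B).hom
      = X.oph (D.invol A).hom (D.invol B).hom ≫ (D.lamPar (D.dg A) (D.dg B)).hom
  /-- [†-ldc.4] : `ι_{A⊗B} ; λ⊕† = (ι ⊗ ι) ; λ⊗` -/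
  ldc4b : ∀ A B : C,
    (D.invol (X.ot A B)).hom ≫ D.dgm (D.lamPar A B).hom
      = X.oth (D.invol A).hom (D.invol B).hom ≫ (D.lamTens (D.dg A) (D.dg B)).hom
  /-- [†-ldc.5] : `ι_⊥ ; λ⊤† = λ⊥` -/
  ldc5a : (D.invol X.pu).hom ≫ D.dgm D.lamTop.hom = D.lamBot.hom
  /-- [†-ldc.5] : `ι_⊤ ; λ⊥† = λ⊤` -/
  ldc5b : (D.invol X.tu).hom ≫ D.dgm D.lamBot.hom = D.lamTop.hom
  /-- [†-ldc.6] : `ι_{A†} = (ι_A⁻¹)†` -/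
  ldc6 : ∀ A : C, (D.invol (D.dg A)).hom = D.dgm ((D.invol A).inv)

/-- The [†-mix] condition for a †-LDC with a mix map: `λ⊥ ; m† = m ; λ⊤`. -/
def DagMixLaw (M : MixCat C) (D : DagData M.X) : Prop :=
  D.lamBot.hom ≫ D.dgm M.mix = M.mix ≫ D.lamTop.hom

end Dagger
section Stmt8

open Opposite

variable {C : Type u} [Category.{v} C]

/-- A bundled monoidal structure induces one on the opposite category. -/
def MonoidalCategory.opMon (M : MonoidalCategory C) : MonoidalCategory Cᵒᵖ :=
  letI := M
  CategoryTheory.monoidalCategoryOp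

/-- The opposite LDC `Xᵒᵖ`: tensor and par are interchanged
(`⊗ᵒᵖ := ⊕`, `⊤ᵒᵖ := ⊥`, `⊕ᵒᵖ := ⊗`, `⊥ᵒᵖ := ⊤`). -/
def LDC.opp (X : LDC C) : LDC Cᵒᵖ where
  T := MonoidalCategory.opMon X.P
  P := MonoidalCategory.opMon X.T
  distL A B Z := (X.distR A.unop B.unop Z.unop).op
  distR A B Z := (X.distL A.unop B.unop Z.unop).op
  distL_natural f g h := Quiver.Hom.unop_inj (X.distR_natural f.unop g.unop h.unop).symm
  distR_natural f g h := Quiver.Hom.unop_inj (X.distL_natural f.unop g.unop h.unop).symm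

/-- The data of a dagger, packaged as the data of a contravariant Frobenius linear
functor `(−)† : Xᵒᵖ → X` (tensor and par part both `dag`, monoidal laxors `λ⊗, λ⊤`,
comonoidal colaxors `λ⊕⁻¹, λ⊥⁻¹`, and the linear strengths given by these as well). -/
def DagData.frobData {X : LDC C} (D : DagData X) : LinearFunctorData X.opp X where
  Ft := D.dag
  Fp := D.dag
  mT A B := (D.lamTens A.unop B.unop).hom
  mU := D.lamTop.hom
  nP A B := (D.lamPar A.unop B.unop).inv
  nU := D.lamBot.inv
  vtR A B := (D.lamPar A.unop B.unop).inv
  vtL A B := (D.lamPar A.unop B.unop).inv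
  vpR A B := (D.lamTens A.unop B.unop).hom
  vpL A B := (D.lamTens A.unop B.unop).hom

section DagHelpers

open Opposite

variable {C : Type u} [Category.{v} C]

lemma LDC.oth_comp (L : LDC C) {A₁ B₁ E₁ A₂ B₂ E₂ : C} (f₁ : A₁ ⟶ B₁) (f₂ : A₂ ⟶ B₂)
    (g₁ : B₁ ⟶ E₁) (g₂ : B₂ ⟶ E₂) :
    L.oth (f₁ ≫ g₁) (f₂ ≫ g₂) = L.oth f₁ f₂ ≫ L.oth g₁ g₂ :=
  letI := L.T
  (MonoidalCategory.tensorHom_comp_tensorHom f₁ f₂ g₁ g₂).symm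

lemma LDC.oth_id' (L : LDC C) (A B : C) : L.oth (𝟙 A) (𝟙 B) = 𝟙 (L.ot A B) :=
  letI := L.T
  MonoidalCategory.id_tensorHom_id A B

lemma LDC.oph_comp (L : LDC C) {A₁ B₁ E₁ A₂ B₂ E₂ : C} (f₁ : A₁ ⟶ B₁) (f₂ : A₂ ⟶ B₂)
    (g₁ : B₁ ⟶ E₁) (g₂ : B₂ ⟶ E₂) :
    L.oph (f₁ ≫ g₁) (f₂ ≫ g₂) = L.oph f₁ f₂ ≫ L.oph g₁ g₂ :=
  letI := L.P
  (MonoidalCategory.tensorHom_comp_tensorHom f₁ f₂ g₁ g₂).symm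

lemma LDC.oph_id' (L : LDC C) (A B : C) : L.oph (𝟙 A) (𝟙 B) = 𝟙 (L.op A B) :=
  letI := L.P
  MonoidalCategory.id_tensorHom_id A B

/-- Tensoring two isos. -/
def LDC.othIso (L : LDC C) {A B A' B' : C} (e : A ≅ A') (f : B ≅ B') :
    L.ot A B ≅ L.ot A' B' where
  hom := L.oth e.hom f.hom
  inv := L.oth e.inv f.inv
  hom_inv_id := by rw [← L.oth_comp, e.hom_inv_id, f.hom_inv_id, L.oth_id']
  inv_hom_id := by rw [← L.oth_comp, e.inv_hom_id, f.inv_hom_id, L.oth_id']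

/-- Parring two isos. -/
def LDC.ophIso (L : LDC C) {A B A' B' : C} (e : A ≅ A') (f : B ≅ B') :
    L.op A B ≅ L.op A' B' where
  hom := L.oph e.hom f.hom
  inv := L.oph e.inv f.inv
  hom_inv_id := by rw [← L.oph_comp, e.hom_inv_id, f.hom_inv_id, L.oph_id']
  inv_hom_id := by rw [← L.oph_comp, e.inv_hom_id, f.inv_hom_id, L.oph_id']

variable {X : LDC C} (D : DagData X)

lemma DagData.dgm_hom_inv {A B : C} (e : A ≅ B) :
    D.dgm e.hom ≫ D.dgm e.inv = 𝟙 (D.dg B) := by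
  rw [← D.dag.map_comp, ← op_comp, Iso.inv_hom_id, op_id, D.dag.map_id]

lemma DagData.dgm_inv_hom {A B : C} (e : A ≅ B) :
    D.dgm e.inv ≫ D.dgm e.hom = 𝟙 (D.dg A) := by
  rw [← D.dag.map_comp, ← op_comp, Iso.hom_inv_id, op_id, D.dag.map_id]

/-- The dagger of an iso. -/
def DagData.dagIso {A B : C} (e : A ≅ B) : D.dg B ≅ D.dg A where
  hom := D.dgm e.hom
  inv := D.dgm e.inv
  hom_inv_id := D.dgm_hom_inv e
  inv_hom_id := D.dgm_inv_hom e

/-- A triple-composite of isos can be inverted. -/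
lemma comp3_inv {E : Type u₃} [Category.{v₃} E] {A₀ A₁ A₂ A₃ B₁ B₂ : E}
    (u : A₀ ≅ A₁) (v : A₁ ≅ A₂) (w : A₂ ≅ A₃) (x : A₀ ≅ B₁) (y : B₁ ≅ B₂) (z : B₂ ≅ A₃)
    (h : u.hom ≫ v.hom ≫ w.hom = x.hom ≫ y.hom ≫ z.hom) :
    w.inv ≫ v.inv ≫ u.inv = z.inv ≫ y.inv ≫ x.inv := by
  have e : u ≪≫ v ≪≫ w = x ≪≫ y ≪≫ z := Iso.ext (by simpa using h)
  have := congrArg Iso.inv e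
  simpa using this

variable {D}

section

lemma dh_lamTens_nat_inv (hD : DagLaws D) {A A' B B' : C} (f : A ⟶ A') (g : B ⟶ B') :
    D.dgm (X.oph f g) ≫ (D.lamTens A B).inv
      = (D.lamTens A' B').inv ≫ X.oth (D.dgm f) (D.dgm g) := by
  rw [Iso.comp_inv_eq, Category.assoc, hD.lamTens_natural f g, Iso.inv_hom_id_assoc]

lemma dh_lamPar_nat_inv (hD : DagLaws D) {A A' B B' : C} (f : A ⟶ A') (g : B ⟶ B') :
    D.dgm (X.oth f g) ≫ (D.lamPar A B).inv
      = (D.lamPar A' B').inv ≫ X.oph (D.dgm f) (D.dgm g) := by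
  rw [Iso.comp_inv_eq, Category.assoc, hD.lamPar_natural f g, Iso.inv_hom_id_assoc]

lemma dh1 (hD : DagLaws D) (A B Cc : C) :
    X.oth (D.lamTens A B).hom (𝟙 (D.dg Cc)) ≫ (D.lamTens (X.op A B) Cc).hom
        ≫ (D.dagIso (X.aP A B Cc)).inv
      = (X.aT (D.dg A) (D.dg B) (D.dg Cc)).hom
          ≫ X.oth (𝟙 (D.dg A)) (D.lamTens B Cc).hom ≫ (D.lamTens A (X.op B Cc)).hom := by
  have h : (X.aT (D.dg A) (D.dg B) (D.dg Cc)).inv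
      ≫ X.oth (D.lamTens A B).hom (𝟙 (D.dg Cc)) ≫ (D.lamTens (X.op A B) Cc).hom
      = X.oth (𝟙 (D.dg A)) (D.lamTens B Cc).hom ≫ (D.lamTens A (X.op B Cc)).hom
          ≫ (D.dagIso (X.aP A B Cc)).hom := hD.ldc1a A B Cc
  rw [Iso.inv_comp_eq] at h
  rw [reassoc_of% h]
  simp

lemma dh2 (hD : DagLaws D) (A B Cc : C) :
    (D.lamPar (X.ot A B) Cc).inv ≫ X.oph (D.lamPar A B).inv (𝟙 (D.dg Cc))
        ≫ (X.aP (D.dg A) (D.dg B) (D.dg Cc)).hom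
      = (D.dagIso (X.aT A B Cc)).inv ≫ (D.lamPar A (X.ot B Cc)).inv
          ≫ X.oph (𝟙 (D.dg A)) (D.lamPar B Cc).inv := by
  have h : (X.aP (D.dg A) (D.dg B) (D.dg Cc)).symm.hom
      ≫ (X.ophIso (D.lamPar A B) (Iso.refl (D.dg Cc))).hom ≫ (D.lamPar (X.ot A B) Cc).hom
      = (X.ophIso (Iso.refl (D.dg A)) (D.lamPar B Cc)).hom
          ≫ (D.lamPar A (X.ot B Cc)).hom ≫ (D.dagIso (X.aT A B Cc)).hom := hD.ldc1b A B Cc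
  exact comp3_inv _ _ _ _ _ _ h

lemma dh_mtlu (hD : DagLaws D) (A : C) :
    X.oth D.lamTop.hom (𝟙 (D.dg A)) ≫ (D.lamTens X.pu A).hom ≫ (D.dagIso (X.luP A)).inv
      = (X.luT (D.dg A)).hom := by
  have h : X.oth D.lamTop.hom (𝟙 (D.dg A)) ≫ (D.lamTens X.pu A).hom
      = (X.luT (D.dg A)).hom ≫ (D.dagIso (X.luP A)).hom := hD.ldc2a A
  rw [reassoc_of% h]
  simp

lemma dh_mtru (hD : DagLaws D) (A : C) :
    X.oth (𝟙 (D.dg A)) D.lamTop.hom ≫ (D.lamTens A X.pu).hom ≫ (D.dagIso (X.ruP A)).inv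
      = (X.ruT (D.dg A)).hom := by
  have h : X.oth (𝟙 (D.dg A)) D.lamTop.hom ≫ (D.lamTens A X.pu).hom
      = (X.ruT (D.dg A)).hom ≫ (D.dagIso (X.ruP A)).hom := hD.ldc2b A
  rw [reassoc_of% h]
  simp

lemma dh_lf1c (hD : DagLaws D) (A : C) :
    (X.luT (D.dg A)).inv ≫ X.oth D.lamTop.hom (𝟙 (D.dg A)) ≫ (D.lamTens X.pu A).hom
      = (D.dagIso (X.luP A)).hom := by
  have h : X.oth D.lamTop.hom (𝟙 (D.dg A)) ≫ (D.lamTens X.pu A).hom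
      = (X.luT (D.dg A)).hom ≫ (D.dagIso (X.luP A)).hom := hD.ldc2a A
  rw [h]
  simp

lemma dh_lf1d (hD : DagLaws D) (A : C) :
    (X.ruT (D.dg A)).inv ≫ X.oth (𝟙 (D.dg A)) D.lamTop.hom ≫ (D.lamTens A X.pu).hom
      = (D.dagIso (X.ruP A)).hom := by
  have h : X.oth (𝟙 (D.dg A)) D.lamTop.hom ≫ (D.lamTens A X.pu).hom
      = (X.ruT (D.dg A)).hom ≫ (D.dagIso (X.ruP A)).hom := hD.ldc2b A
  rw [h]
  simp

lemma dh_nplu (hD : DagLaws D) (A : C) :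
    (D.dagIso (X.luT A)).inv
      = (D.lamPar X.tu A).inv ≫ X.oph D.lamBot.inv (𝟙 (D.dg A)) ≫ (X.luP (D.dg A)).hom := by
  have h : (X.ophIso D.lamBot (Iso.refl (D.dg A))).hom ≫ (D.lamPar X.tu A).hom
      = (X.luP (D.dg A)).hom ≫ (D.dagIso (X.luT A)).hom := hD.ldc2c A
  have h2 : (D.lamPar X.tu A).inv ≫ (X.ophIso D.lamBot (Iso.refl (D.dg A))).inv
      = (D.dagIso (X.luT A)).inv ≫ (X.luP (D.dg A)).inv := by
    have e : (X.ophIso D.lamBot (Iso.refl (D.dg A))) ≪≫ (D.lamPar X.tu A)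
        = (X.luP (D.dg A)) ≪≫ (D.dagIso (X.luT A)) := Iso.ext h
    have := congrArg Iso.inv e
    simpa using this
  show _ = (D.lamPar X.tu A).inv ≫ (X.ophIso D.lamBot (Iso.refl (D.dg A))).inv
      ≫ (X.luP (D.dg A)).hom
  rw [← Category.assoc, h2, Category.assoc, Iso.inv_hom_id, Category.comp_id]

lemma dh_npru (hD : DagLaws D) (A : C) :
    (D.dagIso (X.ruT A)).inv
      = (D.lamPar A X.tu).inv ≫ X.oph (𝟙 (D.dg A)) D.lamBot.inv ≫ (X.ruP (D.dg A)).hom := by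
  have h : (X.ophIso (Iso.refl (D.dg A)) D.lamBot).hom ≫ (D.lamPar A X.tu).hom
      = (X.ruP (D.dg A)).hom ≫ (D.dagIso (X.ruT A)).hom := hD.ldc2d A
  have h2 : (D.lamPar A X.tu).inv ≫ (X.ophIso (Iso.refl (D.dg A)) D.lamBot).inv
      = (D.dagIso (X.ruT A)).inv ≫ (X.ruP (D.dg A)).inv := by
    have e : (X.ophIso (Iso.refl (D.dg A)) D.lamBot) ≪≫ (D.lamPar A X.tu)
        = (X.ruP (D.dg A)) ≪≫ (D.dagIso (X.ruT A)) := Iso.ext h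
    have := congrArg Iso.inv e
    simpa using this
  show _ = (D.lamPar A X.tu).inv ≫ (X.ophIso (Iso.refl (D.dg A)) D.lamBot).inv
      ≫ (X.ruP (D.dg A)).hom
  rw [← Category.assoc, h2, Category.assoc, Iso.inv_hom_id, Category.comp_id]

lemma dh3 (hD : DagLaws D) (A B Cc : C) :
    X.oth (𝟙 (D.dg A)) (D.lamPar B Cc).inv ≫ X.distL (D.dg A) (D.dg B) (D.dg Cc)
        ≫ X.oph (D.lamTens A B).hom (𝟙 (D.dg Cc))
      = (D.lamTens A (X.ot B Cc)).hom ≫ D.dgm (X.distR A B Cc)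
          ≫ (D.lamPar (X.op A B) Cc).inv := by
  have h : X.distL (D.dg A) (D.dg B) (D.dg Cc) ≫ X.oph (D.lamTens A B).hom (𝟙 (D.dg Cc))
      ≫ (D.lamPar (X.op A B) Cc).hom
      = (X.othIso (Iso.refl (D.dg A)) (D.lamPar B Cc)).hom
          ≫ (D.lamTens A (X.ot B Cc)).hom ≫ D.dgm (X.distR A B Cc) := hD.ldc3a A B Cc
  show (X.othIso (Iso.refl (D.dg A)) (D.lamPar B Cc)).inv ≫ _ ≫ _ = _
  rw [Iso.inv_comp_eq]
  simp only [← Category.assoc]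
  rw [Iso.eq_comp_inv]
  simp only [Category.assoc]
  exact h

lemma dh4 (hD : DagLaws D) (A B Cc : C) :
    X.oth (D.lamPar A B).inv (𝟙 (D.dg Cc)) ≫ X.distR (D.dg A) (D.dg B) (D.dg Cc)
        ≫ X.oph (𝟙 (D.dg A)) (D.lamTens B Cc).hom
      = (D.lamTens (X.ot A B) Cc).hom ≫ D.dgm (X.distL A B Cc)
          ≫ (D.lamPar A (X.op B Cc)).inv := by
  have h : X.distR (D.dg A) (D.dg B) (D.dg Cc) ≫ X.oph (𝟙 (D.dg A)) (D.lamTens B Cc).hom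
      ≫ (D.lamPar A (X.op B Cc)).hom
      = (X.othIso (D.lamPar A B) (Iso.refl (D.dg Cc))).hom
          ≫ (D.lamTens (X.ot A B) Cc).hom ≫ D.dgm (X.distL A B Cc) := hD.ldc3b A B Cc
  show (X.othIso (D.lamPar A B) (Iso.refl (D.dg Cc))).inv ≫ _ ≫ _ = _
  rw [Iso.inv_comp_eq]
  simp only [← Category.assoc]
  rw [Iso.eq_comp_inv]
  simp only [Category.assoc]
  exact h

lemma dh_inv_nat (hD : DagLaws D) {A B : C} (g : A ⟶ B) :
    (D.invol A).inv ≫ g = D.dgm (D.dgm g) ≫ (D.invol B).inv := by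
  rw [Iso.inv_comp_eq, ← Category.assoc, ← hD.invol_natural g, Category.assoc,
    Iso.hom_inv_id, Category.comp_id]

lemma dh_cond3 (hD : DagLaws D) (A B : C) :
    (D.lamTens (D.dg A) (D.dg B)).hom ≫ D.dgm ((D.lamPar A B).inv)
        ≫ (D.invol (X.ot A B)).inv
      = X.oth (D.invol A).inv (D.invol B).inv := by
  have h : (D.invol (X.ot A B)).hom ≫ (D.dagIso (D.lamPar A B)).hom
      = (X.othIso (D.invol A) (D.invol B)).hom ≫ (D.lamTens (D.dg A) (D.dg B)).hom :=
    hD.ldc4b A B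
  have h2 : (D.lamTens (D.dg A) (D.dg B)).hom
      = (X.othIso (D.invol A) (D.invol B)).inv ≫ (D.invol (X.ot A B)).hom
          ≫ (D.dagIso (D.lamPar A B)).hom := (Iso.eq_inv_comp _).mpr h.symm
  show _ ≫ (D.dagIso (D.lamPar A B)).inv ≫ _ = (X.othIso (D.invol A) (D.invol B)).inv
  rw [h2]
  simp

lemma dh_cond5 (hD : DagLaws D) :
    D.lamTop.hom ≫ D.dgm D.lamBot.inv ≫ (D.invol X.tu).inv = 𝟙 X.tu := by
  have h : D.lamTop.hom
      = (D.invol X.tu).hom ≫ (D.dagIso D.lamBot).hom := (hD.ldc5b).symm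
  show D.lamTop.hom ≫ (D.dagIso D.lamBot).inv ≫ (D.invol X.tu).inv = 𝟙 X.tu
  rw [h]
  simp

end

section
-- backward helpers

lemma dh_lamTens_nat' {A A' B B' : C} (f : A ⟶ A') (g : B ⟶ B')
    (h : D.dgm (X.oph f g) ≫ (D.lamTens A B).inv
      = (D.lamTens A' B').inv ≫ X.oth (D.dgm f) (D.dgm g)) :
    X.oth (D.dgm f) (D.dgm g) ≫ (D.lamTens A B).hom
      = (D.lamTens A' B').hom ≫ D.dgm (X.oph f g) := by
  rw [Iso.comp_inv_eq] at h
  rw [h]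
  simp

lemma dh_lamPar_nat' {A A' B B' : C} (f : A ⟶ A') (g : B ⟶ B')
    (h : D.dgm (X.oth f g) ≫ (D.lamPar A B).inv
      = (D.lamPar A' B').inv ≫ X.oph (D.dgm f) (D.dgm g)) :
    X.oph (D.dgm f) (D.dgm g) ≫ (D.lamPar A B).hom
      = (D.lamPar A' B').hom ≫ D.dgm (X.oth f g) := by
  rw [Iso.comp_inv_eq] at h
  rw [h]
  simp

lemma dh1' (A B Cc : C)
    (h : X.oth (D.lamTens A B).hom (𝟙 (D.dg Cc)) ≫ (D.lamTens (X.op A B) Cc).hom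
        ≫ (D.dagIso (X.aP A B Cc)).inv
      = (X.aT (D.dg A) (D.dg B) (D.dg Cc)).hom
          ≫ X.oth (𝟙 (D.dg A)) (D.lamTens B Cc).hom ≫ (D.lamTens A (X.op B Cc)).hom) :
    (X.aT (D.dg A) (D.dg B) (D.dg Cc)).inv ≫ X.oth (D.lamTens A B).hom (𝟙 (D.dg Cc))
        ≫ (D.lamTens (X.op A B) Cc).hom
      = X.oth (𝟙 (D.dg A)) (D.lamTens B Cc).hom ≫ (D.lamTens A (X.op B Cc)).hom
          ≫ (D.dagIso (X.aP A B Cc)).hom := by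
  rw [Iso.inv_comp_eq, ← reassoc_of% h]
  simp

lemma dh2' (A B Cc : C)
    (h : (D.lamPar (X.ot A B) Cc).inv ≫ X.oph (D.lamPar A B).inv (𝟙 (D.dg Cc))
        ≫ (X.aP (D.dg A) (D.dg B) (D.dg Cc)).hom
      = (D.dagIso (X.aT A B Cc)).inv ≫ (D.lamPar A (X.ot B Cc)).inv
          ≫ X.oph (𝟙 (D.dg A)) (D.lamPar B Cc).inv) :
    (X.aP (D.dg A) (D.dg B) (D.dg Cc)).inv ≫ X.oph (D.lamPar A B).hom (𝟙 (D.dg Cc))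
        ≫ (D.lamPar (X.ot A B) Cc).hom
      = X.oph (𝟙 (D.dg A)) (D.lamPar B Cc).hom ≫ (D.lamPar A (X.ot B Cc)).hom
          ≫ (D.dagIso (X.aT A B Cc)).hom := by
  have h' : ((D.lamPar (X.ot A B) Cc).symm).hom
      ≫ ((X.ophIso (D.lamPar A B) (Iso.refl (D.dg Cc))).symm).hom
      ≫ (X.aP (D.dg A) (D.dg B) (D.dg Cc)).hom
      = ((D.dagIso (X.aT A B Cc)).symm).hom
          ≫ ((D.lamPar A (X.ot B Cc)).symm).hom
          ≫ ((X.ophIso (Iso.refl (D.dg A)) (D.lamPar B Cc)).symm).hom := h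
  exact comp3_inv _ _ _ _ _ _ h'

lemma dh_mtlu' (A : C)
    (h : X.oth D.lamTop.hom (𝟙 (D.dg A)) ≫ (D.lamTens X.pu A).hom
        ≫ (D.dagIso (X.luP A)).inv = (X.luT (D.dg A)).hom) :
    X.oth D.lamTop.hom (𝟙 (D.dg A)) ≫ (D.lamTens X.pu A).hom
      = (X.luT (D.dg A)).hom ≫ (D.dagIso (X.luP A)).hom := by
  rw [← h]
  simp

lemma dh_mtru' (A : C)
    (h : X.oth (𝟙 (D.dg A)) D.lamTop.hom ≫ (D.lamTens A X.pu).hom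
        ≫ (D.dagIso (X.ruP A)).inv = (X.ruT (D.dg A)).hom) :
    X.oth (𝟙 (D.dg A)) D.lamTop.hom ≫ (D.lamTens A X.pu).hom
      = (X.ruT (D.dg A)).hom ≫ (D.dagIso (X.ruP A)).hom := by
  rw [← h]
  simp

lemma dh_nplu' (A : C)
    (h : (D.dagIso (X.luT A)).inv
      = (D.lamPar X.tu A).inv ≫ X.oph D.lamBot.inv (𝟙 (D.dg A)) ≫ (X.luP (D.dg A)).hom) :
    X.oph D.lamBot.hom (𝟙 (D.dg A)) ≫ (D.lamPar X.tu A).hom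
      = (X.luP (D.dg A)).hom ≫ (D.dagIso (X.luT A)).hom := by
  have h' : (D.lamPar X.tu A).inv ≫ (X.ophIso D.lamBot (Iso.refl (D.dg A))).inv
      ≫ (X.luP (D.dg A)).hom = (D.dagIso (X.luT A)).inv := h.symm
  rw [Iso.inv_comp_eq] at h'
  rw [Iso.inv_comp_eq] at h'
  show (X.ophIso D.lamBot (Iso.refl (D.dg A))).hom ≫ _ = _
  rw [h']
  simp

lemma dh_npru' (A : C)
    (h : (D.dagIso (X.ruT A)).inv
      = (D.lamPar A X.tu).inv ≫ X.oph (𝟙 (D.dg A)) D.lamBot.inv ≫ (X.ruP (D.dg A)).hom) :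
    X.oph (𝟙 (D.dg A)) D.lamBot.hom ≫ (D.lamPar A X.tu).hom
      = (X.ruP (D.dg A)).hom ≫ (D.dagIso (X.ruT A)).hom := by
  have h' : (D.lamPar A X.tu).inv ≫ (X.ophIso (Iso.refl (D.dg A)) D.lamBot).inv
      ≫ (X.ruP (D.dg A)).hom = (D.dagIso (X.ruT A)).inv := h.symm
  rw [Iso.inv_comp_eq] at h'
  rw [Iso.inv_comp_eq] at h'
  show (X.ophIso (Iso.refl (D.dg A)) D.lamBot).hom ≫ _ = _
  rw [h']
  simp

lemma dh3' (A B Cc : C)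
    (h : X.oth (𝟙 (D.dg A)) (D.lamPar B Cc).inv ≫ X.distL (D.dg A) (D.dg B) (D.dg Cc)
        ≫ X.oph (D.lamTens A B).hom (𝟙 (D.dg Cc))
      = (D.lamTens A (X.ot B Cc)).hom ≫ D.dgm (X.distR A B Cc)
          ≫ (D.lamPar (X.op A B) Cc).inv) :
    X.distL (D.dg A) (D.dg B) (D.dg Cc) ≫ X.oph (D.lamTens A B).hom (𝟙 (D.dg Cc))
        ≫ (D.lamPar (X.op A B) Cc).hom
      = X.oth (𝟙 (D.dg A)) (D.lamPar B Cc).hom ≫ (D.lamTens A (X.ot B Cc)).hom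
          ≫ D.dgm (X.distR A B Cc) := by
  have h1 : (X.othIso (Iso.refl (D.dg A)) (D.lamPar B Cc)).inv
      ≫ X.distL (D.dg A) (D.dg B) (D.dg Cc)
      ≫ X.oph (D.lamTens A B).hom (𝟙 (D.dg Cc))
      = (D.lamTens A (X.ot B Cc)).hom ≫ D.dgm (X.distR A B Cc)
          ≫ (D.lamPar (X.op A B) Cc).inv := h
  rw [Iso.inv_comp_eq] at h1
  simp only [← Category.assoc] at h1 ⊢
  rw [Iso.eq_comp_inv] at h1
  exact h1

lemma dh4' (A B Cc : C)
    (h : X.oth (D.lamPar A B).inv (𝟙 (D.dg Cc)) ≫ X.distR (D.dg A) (D.dg B) (D.dg Cc)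
        ≫ X.oph (𝟙 (D.dg A)) (D.lamTens B Cc).hom
      = (D.lamTens (X.ot A B) Cc).hom ≫ D.dgm (X.distL A B Cc)
          ≫ (D.lamPar A (X.op B Cc)).inv) :
    X.distR (D.dg A) (D.dg B) (D.dg Cc) ≫ X.oph (𝟙 (D.dg A)) (D.lamTens B Cc).hom
        ≫ (D.lamPar A (X.op B Cc)).hom
      = X.oth (D.lamPar A B).hom (𝟙 (D.dg Cc)) ≫ (D.lamTens (X.ot A B) Cc).hom
          ≫ D.dgm (X.distL A B Cc) := by
  have h1 : (X.othIso (D.lamPar A B) (Iso.refl (D.dg Cc))).inv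
      ≫ X.distR (D.dg A) (D.dg B) (D.dg Cc)
      ≫ X.oph (𝟙 (D.dg A)) (D.lamTens B Cc).hom
      = (D.lamTens (X.ot A B) Cc).hom ≫ D.dgm (X.distL A B Cc)
          ≫ (D.lamPar A (X.op B Cc)).inv := h
  rw [Iso.inv_comp_eq] at h1
  simp only [← Category.assoc] at h1 ⊢
  rw [Iso.eq_comp_inv] at h1
  exact h1

lemma dh_ldc4b' (A B : C)
    (h : (D.lamTens (D.dg A) (D.dg B)).hom ≫ D.dgm ((D.lamPar A B).inv)
        ≫ (D.invol (X.ot A B)).inv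
      = X.oth (D.invol A).inv (D.invol B).inv) :
    (D.invol (X.ot A B)).hom ≫ D.dgm (D.lamPar A B).hom
      = X.oth (D.invol A).hom (D.invol B).hom ≫ (D.lamTens (D.dg A) (D.dg B)).hom := by
  have h' : (D.lamTens (D.dg A) (D.dg B)).hom ≫ (D.dagIso (D.lamPar A B)).inv
      ≫ (D.invol (X.ot A B)).inv
      = (X.othIso (D.invol A) (D.invol B)).inv := h
  simp only [← Category.assoc] at h'
  rw [Iso.comp_inv_eq] at h'
  rw [Iso.comp_inv_eq] at h'
  show (D.invol (X.ot A B)).hom ≫ (D.dagIso (D.lamPar A B)).hom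
      = (X.othIso (D.invol A) (D.invol B)).hom ≫ (D.lamTens (D.dg A) (D.dg B)).hom
  rw [h']
  simp

lemma dh_ldc5b' (h : D.lamTop.hom ≫ D.dgm D.lamBot.inv ≫ (D.invol X.tu).inv = 𝟙 X.tu) :
    (D.invol X.tu).hom ≫ D.dgm D.lamBot.hom = D.lamTop.hom := by
  have h' : D.lamTop.hom ≫ (D.dagIso D.lamBot).inv ≫ (D.invol X.tu).inv = 𝟙 X.tu := h
  simp only [← Category.assoc] at h'
  rw [Iso.comp_inv_eq] at h'
  rw [Iso.comp_inv_eq] at h'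
  show (D.invol X.tu).hom ≫ (D.dagIso D.lamBot).hom = D.lamTop.hom
  rw [h']
  simp

lemma dh_invol_nat' {A B : C} (f : A ⟶ B)
    (h : (D.invol A).inv ≫ f = D.dgm (D.dgm f) ≫ (D.invol B).inv) :
    f ≫ (D.invol B).hom = (D.invol A).hom ≫ D.dgm (D.dgm f) := by
  rw [Iso.inv_comp_eq] at h
  conv_lhs => rw [h]
  simp

end

end DagHelpers

/-!
STATEMENT 8: A †-LDC, i.e. an LDC `X` with a contravariant Frobenius linear functor
`(−)† : Xᵒᵖ → X` which is a linear involutive equivalence `(−)† ⊣⊣ ((−)†)ᵒᵖ` (the unit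
and counit of the adjunction being given by the same linear natural isomorphism
`ι = (ι⁻¹, ι)`), is exactly the same data as an LDC with a functor `(−)† : Xᵒᵖ ⥤ X`,
natural isomorphisms `λ⊗, λ⊕, λ⊤, λ⊥` and an involutor `ι : A ≅ (A†)†` satisfying
[†-ldc.1]–[†-ldc.6] (i.e. `DagLaws`).
-/
theorem dagger_ldc_iff_involutive_frobenius_equivalence
    (X : LDC C) (D : DagData X) :
    DagLaws D ↔
      -- (−)† is a Frobenius linear functor Xᵒᵖ → X:
      (LinearFunctorLaws D.frobData ∧
      -- it is an involutive equivalence: there is an adjunction (−)† ⊣ ((−)†)ᵒᵖ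
      -- whose unit and counit are both given by the involutor ι:
      (∃ adj : D.dag ⊣ D.dag.rightOp,
          (∀ A : Cᵒᵖ, adj.unit.app A = ((D.invol A.unop).inv).op) ∧
          (∀ A : C, adj.counit.app A = (D.invol A).inv)) ∧
      -- the unit/counit ι = (ι⁻¹, ι) is a *linear* natural isomorphism, i.e. it is
      -- monoidal and comonoidal with respect to the composite laxors:
      (∀ A B : C,
        (D.lamTens (D.dg A) (D.dg B)).hom ≫ D.dgm ((D.lamPar A B).inv)
           ≫ (D.invol (X.ot A B)).inv
          = X.oth (D.invol A).inv (D.invol B).inv) ∧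
      (∀ A B : C,
        (D.invol (X.op A B)).hom ≫ D.dgm (D.lamTens A B).hom
          = X.oph (D.invol A).hom (D.invol B).hom ≫ (D.lamPar (D.dg A) (D.dg B)).hom) ∧
      (D.lamTop.hom ≫ D.dgm D.lamBot.inv ≫ (D.invol X.tu).inv = 𝟙 X.tu) ∧
      ((D.invol X.pu).hom ≫ D.dgm D.lamTop.hom = D.lamBot.hom)) := by
  constructor
  · intro hD
    refine ⟨?_, ?_, fun A B => dh_cond3 hD A B, fun A B => hD.ldc4a A B,
      dh_cond5 hD, hD.ldc5a⟩
    · exact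
        { mT_natural := fun f g => hD.lamTens_natural f.unop g.unop
          mT_assoc := fun A B Cc => dh1 hD A.unop B.unop Cc.unop
          mT_lu := fun A => dh_mtlu hD A.unop
          mT_ru := fun A => dh_mtru hD A.unop
          nP_natural := fun f g => dh_lamPar_nat_inv hD f.unop g.unop
          nP_assoc := fun A B Cc => dh2 hD A.unop B.unop Cc.unop
          nP_lu := fun A => dh_nplu hD A.unop
          nP_ru := fun A => dh_npru hD A.unop
          vtR_natural := fun f g => dh_lamPar_nat_inv hD f.unop g.unop
          vtL_natural := fun f g => dh_lamPar_nat_inv hD f.unop g.unop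
          vpR_natural := fun f g => hD.lamTens_natural f.unop g.unop
          vpL_natural := fun f g => hD.lamTens_natural f.unop g.unop
          lf1a := fun A => dh_nplu hD A.unop
          lf1b := fun A => dh_npru hD A.unop
          lf1c := fun A => dh_lf1c hD A.unop
          lf1d := fun A => dh_lf1d hD A.unop
          lf2a := fun A B Cc => (dh2 hD A.unop B.unop Cc.unop).symm
          lf2b := fun A B Cc => (dh2 hD A.unop B.unop Cc.unop).symm
          lf2c := fun A B Cc => dh1 hD A.unop B.unop Cc.unop
          lf2d := fun A B Cc => dh1 hD A.unop B.unop Cc.unop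
          lf3a := fun A B Cc => (dh2 hD A.unop B.unop Cc.unop).symm
          lf3b := fun A B Cc => dh1 hD A.unop B.unop Cc.unop
          lf4a := fun A B Cc => dh3 hD A.unop B.unop Cc.unop
          lf4b := fun A B Cc => dh4 hD A.unop B.unop Cc.unop
          lf4c := fun A B Cc => dh3 hD A.unop B.unop Cc.unop
          lf4d := fun A B Cc => dh4 hD A.unop B.unop Cc.unop
          lf5a := fun A B Cc => dh3 hD A.unop B.unop Cc.unop
          lf5b := fun A B Cc => dh4 hD A.unop B.unop Cc.unop
          lf5c := fun A B Cc => dh3 hD A.unop B.unop Cc.unop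
          lf5d := fun A B Cc => dh4 hD A.unop B.unop Cc.unop }
    · refine ⟨{ unit := ⟨fun A => ((D.invol A.unop).inv).op, ?_⟩, counit := ⟨fun A => (D.invol A).inv, ?_⟩, left_triangle_components := ?_, right_triangle_components := ?_ }, fun A => rfl, fun A => rfl⟩
      · intro A B f
        apply Quiver.Hom.unop_inj
        exact dh_inv_nat hD f.unop
      · intro A B f
        exact (dh_inv_nat hD f).symm
      · intro A
        show D.dgm (D.invol A.unop).inv ≫ (D.invol (D.dg A.unop)).inv = 𝟙 (D.dg A.unop)
        rw [← hD.ldc6 A.unop]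
        exact Iso.hom_inv_id _
      · intro A
        apply Quiver.Hom.unop_inj
        show D.dgm (D.invol A).inv ≫ (D.invol (D.dg A)).inv = 𝟙 (D.dg A)
        rw [← hD.ldc6 A]
        exact Iso.hom_inv_id _
  · rintro ⟨lf, ⟨adj, hu, hc⟩, c3, c4, c5, c6⟩
    have hnat : ∀ {A B : C} (f : A ⟶ B),
        (D.invol A).inv ≫ f = D.dgm (D.dgm f) ≫ (D.invol B).inv := by
      intro A B f
      have n := adj.unit.naturality f.op
      rw [hu, hu] at n
      exact congrArg Quiver.Hom.unop n
    have hldc6 : ∀ A : C, (D.invol (D.dg A)).hom = D.dgm ((D.invol A).inv) := by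
      intro A
      have t := adj.left_triangle_components (op A)
      rw [hu, hc] at t
      rw [Iso.comp_inv_eq] at t
      exact (Category.id_comp _).symm.trans t.symm
    exact
      { lamTens_natural := fun f g => lf.mT_natural f.op g.op
        lamPar_natural := fun f g => dh_lamPar_nat' f g (lf.nP_natural f.op g.op)
        invol_natural := fun f => dh_invol_nat' f (hnat f)
        ldc1a := fun A B Cc => dh1' A B Cc (lf.mT_assoc (op A) (op B) (op Cc))
        ldc1b := fun A B Cc => dh2' A B Cc (lf.nP_assoc (op A) (op B) (op Cc))
        ldc2a := fun A => dh_mtlu' A (lf.mT_lu (op A))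
        ldc2b := fun A => dh_mtru' A (lf.mT_ru (op A))
        ldc2c := fun A => dh_nplu' A (lf.nP_lu (op A))
        ldc2d := fun A => dh_npru' A (lf.nP_ru (op A))
        ldc3a := fun A B Cc => dh3' A B Cc (lf.lf4a (op A) (op B) (op Cc))
        ldc3b := fun A B Cc => dh4' A B Cc (lf.lf4b (op A) (op B) (op Cc))
        ldc4a := c4
        ldc4b := fun A B => dh_ldc4b' A B (c3 A B)
        ldc5a := c6
        ldc5b := dh_ldc5b' c5
        ldc6 := hldc6 }

end Stmt8
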